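/- Under the stated assumptions, for every x > 0, lim_{δ→0+} limsup_{n→∞} m_n ∫_0^{δ/n} (1 − (1−q)^n) · F̄(a_n q^{1/α'} x) · q^{−ρ} L(1/q) dq = 0. -/

import Mathlib

open Filter Set

open MeasureTheory

lemma slow_uct (L : ℝ → ℝ) (hLmeas : Measurable L) (hLpos : ∀ x : ℝ, 0 < x → 0 < L x)
    (hLslow : ∀ c : ℝ, 0 < c → Tendsto (fun x : ℝ => L (c * x) / L x) atTop (nhds 1))
    {ε : ℝ} (hε : 0 < ε) :
    ∃ U : ℝ, ∀ u, U ≤ u → ∀ c, 0 ≤ c → c ≤ 2 →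
      |Real.log (L (Real.exp (u + c))) - Real.log (L (Real.exp u))| ≤ ε := by
  set h : ℝ → ℝ := fun u => Real.log (L (Real.exp u)) with hh
  have hmeas : Measurable h := Real.measurable_log.comp (hLmeas.comp Real.measurable_exp)
  have hΔ : ∀ t : ℝ, Tendsto (fun u : ℝ => h (u + t) - h u) atTop (nhds 0) := by
    intro t
    have h2 : Tendsto (fun u : ℝ => L (Real.exp t * Real.exp u) / L (Real.exp u)) atTop
        (nhds 1) := (hLslow (Real.exp t) (Real.exp_pos t)).comp Real.tendsto_exp_atTop
    have h3 := ((Real.continuousAt_log one_ne_zero).tendsto).comp h2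
    rw [Real.log_one] at h3
    convert h3 using 2 with u
    rw [Function.comp_apply, ← Real.exp_add, Real.log_div (hLpos _ (Real.exp_pos _)).ne'
      (hLpos _ (Real.exp_pos _)).ne', add_comm t u]
  by_contra hcon
  push_neg at hcon
  -- build sequences
  have hseq : ∀ j : ℕ, ∃ u : ℝ, (j : ℝ) ≤ u ∧ ∃ c, 0 ≤ c ∧ c ≤ 2 ∧
      ε < |h (u + c) - h u| := by
    intro j
    obtain ⟨u, hu, c, hc0, hc2, hc⟩ := hcon (j : ℝ)
    exact ⟨u, hu, c, hc0, hc2, hc⟩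
  choose u hu c hc0 hc2 hcbig using hseq
  have hutop : Tendsto u atTop atTop :=
    tendsto_atTop_mono hu tendsto_natCast_atTop_atTop
  -- the sets
  set E : ℕ → Set ℝ := fun k =>
    Icc (0:ℝ) 4 ∩ ⋂ j, ⋂ (_ : k ≤ j), {t | |h (u j + t) - h (u j)| ≤ ε/4} with hE
  set F : ℕ → Set ℝ := fun k =>
    Icc (0:ℝ) 4 ∩ ⋂ j, ⋂ (_ : k ≤ j), {t | |h (u j + c j + t) - h (u j + c j)| ≤ ε/4} with hF
  have hmE : ∀ k, MeasurableSet (E k) := by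
    intro k
    refine measurableSet_Icc.inter (MeasurableSet.iInter fun j => MeasurableSet.iInter
      fun _ => ?_)
    have : Measurable fun t => |h (u j + t) - h (u j)| :=
      ((hmeas.comp (measurable_const.add measurable_id)).sub measurable_const).abs
    exact this measurableSet_Iic
  have hmF : ∀ k, MeasurableSet (F k) := by
    intro k
    refine measurableSet_Icc.inter (MeasurableSet.iInter fun j => MeasurableSet.iInter
      fun _ => ?_)
    have : Measurable fun t => |h (u j + c j + t) - h (u j + c j)| :=
      ((hmeas.comp (measurable_const.add measurable_id)).sub measurable_const).abs
    exact this measurableSet_Iic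
  have hmonoE : Monotone E := by
    intro k l hkl t ht
    refine ⟨ht.1, ?_⟩
    have h2 := ht.2
    simp only [mem_iInter, mem_setOf_eq] at h2 ⊢
    exact fun j hj => h2 j (hkl.trans hj)
  have hmonoF : Monotone F := by
    intro k l hkl t ht
    refine ⟨ht.1, ?_⟩
    have h2 := ht.2
    simp only [mem_iInter, mem_setOf_eq] at h2 ⊢
    exact fun j hj => h2 j (hkl.trans hj)
  have hUE : (⋃ k, E k) = Icc (0:ℝ) 4 := by
    apply Set.Subset.antisymm
    · exact Set.iUnion_subset fun k => inter_subset_left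
    · intro t ht
      have : Tendsto (fun j => h (u j + t) - h (u j)) atTop (nhds 0) :=
        (hΔ t).comp hutop
      have := (this.eventually (eventually_abs_sub_lt 0 (by positivity : (0:ℝ) < ε/4)))
      rw [eventually_atTop] at this
      obtain ⟨k, hk⟩ := this
      refine mem_iUnion.2 ⟨k, ht, ?_⟩
      simp only [mem_iInter, mem_setOf_eq]
      intro j hj
      have := hk j hj
      simp only [sub_zero] at this
      exact this.le
  have hUF : (⋃ k, F k) = Icc (0:ℝ) 4 := by
    apply Set.Subset.antisymm
    · exact Set.iUnion_subset fun k => inter_subset_left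
    · intro t ht
      have hvtop : Tendsto (fun j => u j + c j) atTop atTop :=
        tendsto_atTop_mono (fun j => le_add_of_le_of_nonneg (hu j) (hc0 j))
          tendsto_natCast_atTop_atTop
      have : Tendsto (fun j => h (u j + c j + t) - h (u j + c j)) atTop (nhds 0) :=
        (hΔ t).comp hvtop
      have := (this.eventually (eventually_abs_sub_lt 0 (by positivity : (0:ℝ) < ε/4)))
      rw [eventually_atTop] at this
      obtain ⟨k, hk⟩ := this
      refine mem_iUnion.2 ⟨k, ht, ?_⟩
      simp only [mem_iInter, mem_setOf_eq]
      intro j hj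
      have := hk j hj
      simp only [sub_zero] at this
      exact this.le
  -- measures
  have hbig : ∀ (S : ℕ → Set ℝ), Monotone S → (⋃ k, S k) = Icc (0:ℝ) 4 →
      ∃ k, (7/2 : ENNReal) < volume (S k) := by
    intro S hmono hUS
    have hμ : volume (⋃ k, S k) = ⨆ k, volume (S k) :=
      (hmono.directed_le).measure_iUnion
    rw [hUS, Real.volume_Icc] at hμ
    have h4 : (7/2 : ENNReal) < ENNReal.ofReal (4 - 0) := by
      rw [show (4:ℝ) - 0 = 4 by norm_num]
      rw [show ((7:ENNReal)/2) = ENNReal.ofReal (7/2) by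
        rw [ENNReal.ofReal_div_of_pos] <;> norm_num]
      exact ENNReal.ofReal_lt_ofReal_iff_of_nonneg (by norm_num) |>.2 (by norm_num)
    rw [hμ] at h4
    exact lt_iSup_iff.1 h4
  obtain ⟨k1, hk1⟩ := hbig E hmonoE hUE
  obtain ⟨k2, hk2⟩ := hbig F hmonoF hUF
  set k := max k1 k2 with hk
  have hvolE : (7/2 : ENNReal) < volume (E k) :=
    lt_of_lt_of_le hk1 (measure_mono (hmonoE (le_max_left _ _)))
  have hvolF : (7/2 : ENNReal) < volume (F k) :=
    lt_of_lt_of_le hk2 (measure_mono (hmonoF (le_max_right _ _)))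
  set B : Set ℝ := (fun t => t + -(c k)) ⁻¹' F k with hB
  have hvolB : volume B = volume (F k) := measure_preimage_add_right volume _ _
  have hsub : E k ∪ B ⊆ Icc (0 : ℝ) 6 := by
    rintro t (ht | ht)
    · exact ⟨ht.1.1, by linarith [ht.1.2]⟩
    · have h1 := (ht : t + -(c k) ∈ F k).1
      constructor
      · have h2 := h1.1; have := hc0 k; simp only at h2; linarith
      · have h2 := h1.2; have := hc2 k; simp only at h2; linarith
  have hne : (E k ∩ B).Nonempty := by
    by_contra hemp
    rw [Set.not_nonempty_iff_eq_empty] at hemp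
    have hdisj : Disjoint (E k) B := Set.disjoint_iff_inter_eq_empty.2 hemp
    have hmB : MeasurableSet B := (hmF k).preimage (measurable_id.add_const _)
    have hun : volume (E k ∪ B) = volume (E k) + volume B :=
      measure_union hdisj hmB
    have hle : volume (E k ∪ B) ≤ volume (Icc (0 : ℝ) 6) := measure_mono hsub
    rw [Real.volume_Icc] at hle
    have h6 : ENNReal.ofReal (6 - 0) ≤ (7 : ENNReal) := by
      rw [show (6:ℝ) - 0 = 6 by norm_num]
      exact (ENNReal.ofReal_le_ofReal (by norm_num : (6:ℝ) ≤ 7)).trans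
        (by simp [ENNReal.ofReal_ofNat])
    rw [hun, hvolB] at hle
    have h7 : (7 : ENNReal) < volume (E k) + volume (F k) := by
      calc (7 : ENNReal) = 7/2 + 7/2 := by
            rw [ENNReal.div_add_div_same]
            rw [ENNReal.eq_div_iff (by norm_num) (by norm_num)]
            norm_num
        _ < volume (E k) + volume (F k) := ENNReal.add_lt_add hvolE hvolF
    exact absurd (h7.trans_le (hle.trans h6)) (lt_irrefl _)
  obtain ⟨t, htE, htB⟩ := hne
  have h1 : |h (u k + t) - h (u k)| ≤ ε/4 := by
    have := htE.2
    simp only [mem_iInter, mem_setOf_eq] at this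
    exact this k le_rfl
  have h2 : |h (u k + t) - h (u k + c k)| ≤ ε/4 := by
    have := (htB : t + -(c k) ∈ F k).2
    simp only [mem_iInter, mem_setOf_eq] at this
    have h3 := this k le_rfl
    rw [show u k + c k + (t + -(c k)) = u k + t by ring] at h3
    exact h3
  have : |h (u k + c k) - h (u k)| ≤ ε/2 := by
    calc |h (u k + c k) - h (u k)|
        ≤ |h (u k + c k) - h (u k + t)| + |h (u k + t) - h (u k)| := abs_sub_le _ _ _
      _ ≤ ε/4 + ε/4 := add_le_add (by rw [abs_sub_comm]; exact h2) h1
      _ = ε/2 := by ring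
  exact absurd (lt_of_lt_of_le (hcbig k) this) (by linarith)

lemma slow_potter (L : ℝ → ℝ) (hLmeas : Measurable L) (hLpos : ∀ x : ℝ, 0 < x → 0 < L x)
    (hLslow : ∀ c : ℝ, 0 < c → Tendsto (fun x : ℝ => L (c * x) / L x) atTop (nhds 1))
    {ε : ℝ} (hε : 0 < ε) :
    ∃ X : ℝ, 1 ≤ X ∧ ∀ t s : ℝ, X ≤ t → t ≤ s → L s ≤ 3 * L t * (s/t) ^ ε := by
  set h : ℝ → ℝ := fun u => Real.log (L (Real.exp u)) with hh
  set ε' : ℝ := min (2*ε) 1 with hε'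
  have hε'pos : 0 < ε' := lt_min (by linarith) one_pos
  have hε'le1 : ε' ≤ 1 := min_le_right _ _
  have hε'le : ε' / 2 ≤ ε := by
    have := min_le_left (2*ε) 1
    linarith
  obtain ⟨U, hU⟩ := slow_uct L hLmeas hLpos hLslow hε'pos
  set U' : ℝ := max U 0 with hU'
  have chain : ∀ k : ℕ, ∀ v, U' ≤ v → ∀ c : ℝ, 0 ≤ c → c ≤ 2*((k:ℝ)+1) →
      h (v + c) - h v ≤ ε' * ((k:ℝ)+1) := by
    intro k
    induction k with
    | zero =>
      intro v hv c hc0 hc2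
      have := hU v (le_trans (le_max_left _ _) hv) c hc0 (by push_cast at hc2; linarith)
      have h2 := (abs_le.1 this).2
      push_cast
      linarith
    | succ k ih =>
      intro v hv c hc0 hc2
      by_cases hcase : c ≤ 2*(k+1)
      · have := ih v hv c hc0 hcase
        have : ε' * (k+1) ≤ ε' * (k+1+1) := by
          apply mul_le_mul_of_nonneg_left _ hε'pos.le
          push_cast; linarith
        push_cast at *
        linarith [ih v hv c hc0 (by linarith)]
      · push_neg at hcase
        have hc2' : (2:ℝ) ≤ c := by
          have : (0:ℝ) ≤ (k:ℝ) := Nat.cast_nonneg k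
          push_cast at hcase; linarith
        have step1 : h (v + (c-2) + 2) - h (v + (c-2)) ≤ ε' := by
          have hvc : U ≤ v + (c - 2) :=
            le_trans (le_max_left U 0) (by linarith)
          have := hU (v + (c-2)) hvc 2 (by norm_num) le_rfl
          exact (abs_le.1 this).2
        have step2 : h (v + (c-2)) - h v ≤ ε' * (k+1) := by
          apply ih v hv (c-2) (by linarith)
          push_cast at hc2 ⊢; linarith
        have harg : v + (c-2) + 2 = v + c := by ring
        rw [harg] at step1
        push_cast at step2 ⊢
        linarith
  refine ⟨Real.exp U', Real.one_le_exp (le_max_right _ _), ?_⟩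
  intro t s ht hts
  have ht1 : (1:ℝ) ≤ t := le_trans (Real.one_le_exp (le_max_right _ _)) ht
  have htpos : (0:ℝ) < t := lt_of_lt_of_le one_pos ht1
  have hspos : (0:ℝ) < s := lt_of_lt_of_le htpos hts
  set c : ℝ := Real.log s - Real.log t with hc
  have hc0 : 0 ≤ c := by
    have := Real.log_le_log htpos hts
    linarith
  set k : ℕ := ⌊c/2⌋₊ with hk
  have hck : c ≤ 2*(k+1) := by
    have := Nat.lt_floor_add_one (c/2)
    push_cast
    linarith
  have hlogt : U' ≤ Real.log t := by
    rw [← Real.log_exp U']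
    exact Real.log_le_log (Real.exp_pos _) ht
  have hbound := chain k (Real.log t) hlogt c hc0 hck
  have hkc : (k:ℝ) ≤ c/2 := Nat.floor_le (by linarith)
  have hbound2 : h (Real.log t + c) - h (Real.log t) ≤ 1 + ε * c := by
    have h1 : ε' * (k+1) ≤ ε' * (c/2 + 1) :=
      mul_le_mul_of_nonneg_left (by linarith) hε'pos.le
    have h2 : ε' * (c/2+1) = ε' + (ε'/2) * c := by ring
    have h3 : (ε'/2) * c ≤ ε * c := mul_le_mul_of_nonneg_right hε'le hc0
    have h4 : h (Real.log t + c) - h (Real.log t) ≤ ε' + (ε'/2) * c := by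
      rw [← h2]; exact hbound.trans h1
    exact h4.trans (by linarith [h3, hε'le1])
  have hexp : h (Real.log t + c) = Real.log (L s) := by
    simp only [hh]
    rw [show Real.log t + c = Real.log s by ring, Real.exp_log hspos]
  have hexpt : h (Real.log t) = Real.log (L t) := by
    simp only [hh]
    rw [Real.exp_log htpos]
  rw [hexp, hexpt] at hbound2
  have hLs : L s = Real.exp (Real.log (L s)) := (Real.exp_log (hLpos s hspos)).symm
  rw [hLs]
  calc Real.exp (Real.log (L s))
      ≤ Real.exp (Real.log (L t) + 1 + ε * c) := Real.exp_le_exp.2 (by linarith)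
    _ = Real.exp (Real.log (L t)) * Real.exp 1 * Real.exp (ε * c) := by
        rw [← Real.exp_add, ← Real.exp_add]
    _ = L t * Real.exp 1 * (s/t) ^ ε := by
        rw [Real.exp_log (hLpos t htpos)]
        congr 1
        rw [Real.rpow_def_of_pos (div_pos hspos htpos), Real.log_div hspos.ne' htpos.ne']
        ring_nf
        rw [hc, mul_sub]
    _ ≤ 3 * L t * (s/t) ^ ε := by
        have he : Real.exp 1 ≤ 3 := by
          have := Real.exp_one_lt_d9
          linarith
        have hLt : 0 < L t := hLpos t htpos
        have hrp : (0:ℝ) ≤ (s/t) ^ ε := Real.rpow_nonneg (by positivity) _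
        nlinarith [mul_nonneg (mul_nonneg hLt.le hrp) (sub_nonneg.2 he)]


/-- Negligibility of the small-`q` part of the exceedance probability: for every `x > 0`,
`lim_{δ→0+} limsup_{n→∞} m_n ∫_0^{δ/n} (1 − (1−q)^n) F̄(a_n q^{1/α′} x) q^{−ρ} L(1/q) dq = 0`
(the limsup is taken in `ℝ≥0∞`). -/
theorem exceedance_lower_part_negligible
    (L : ℝ → ℝ) (hLmeas : Measurable L) (hLpos : ∀ x : ℝ, 0 < x → 0 < L x)
    (hLslow : ∀ c : ℝ, 0 < c → Tendsto (fun x : ℝ => L (c * x) / L x) atTop (nhds 1))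
    (Fbar : ℝ → ℝ) (hFmono : AntitoneOn Fbar (Set.Ioi 0))
    (hFrange : ∀ x : ℝ, 0 < x → Fbar x ∈ Set.Icc (0:ℝ) 1)
    (α C_X α' ρ : ℝ) (hα : 0 < α) (hC : 0 < C_X)
    (hFtail : Tendsto (fun x : ℝ => x ^ α * Fbar x) atTop (nhds C_X))
    (hα' : 0 < α') (hρ : ρ < 1)
    (β : ℝ) (hβdef : β = α / α' + ρ - 1) (hβ : β ∈ Set.Ioo (0:ℝ) 1)
    (m : ℕ → ℕ) (hmmono : StrictMono m) (hm1 : ∀ n, 1 ≤ m n)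
    (hmgrow : Tendsto (fun n : ℕ => (m n : ℝ) * L n / (n : ℝ) ^ (1 - ρ)) atTop atTop)
    (a : ℕ → ℝ)
    (ha : ∀ n : ℕ, a n
      = (C_X * (Real.Gamma (1 - β) / β) * (n : ℝ) ^ β * (m n : ℝ) * L n) ^ (1 / α))
    (x : ℝ) (hx : 0 < x) :
    Tendsto
      (fun δ : ℝ => Filter.limsup
        (fun n : ℕ => ENNReal.ofReal ((m n : ℝ) *
          ∫ q in Set.Ioo (0:ℝ) (δ / (n : ℝ)),
            (1 - (1 - q) ^ n) * Fbar (a n * q ^ (1 / α') * x) * q ^ (-ρ) * L (1 / q)))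
        atTop)
      (nhdsWithin (0:ℝ) (Set.Ioi 0)) (nhds (0 : ENNReal)) := by
  obtain ⟨hβ0, hβ1⟩ := hβ
  set ε : ℝ := (1 - β) / 2 with hεdef
  have hεpos : 0 < ε := by simp only [hεdef]; linarith
  set p : ℝ := 1 - β - ε with hpdef
  have hppos : 0 < p := by simp only [hpdef, hεdef]; linarith
  have hβε1 : β + ε < 1 := by simp only [hεdef]; linarith
  have hΓpos : 0 < Real.Gamma (1 - β) := Real.Gamma_pos_of_pos (by linarith)
  -- tail bound on Fbar
  obtain ⟨K, hK0, hKb⟩ : ∃ K : ℝ, 0 < K ∧ ∀ y : ℝ, 0 < y → Fbar y ≤ K * y ^ (-α) := by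
    have hev : ∀ᶠ y : ℝ in atTop, y ^ α * Fbar y < C_X + 1 :=
      hFtail.eventually_lt_const (by linarith)
    obtain ⟨Y₀, hY₀⟩ := eventually_atTop.1 hev
    set Y : ℝ := max Y₀ 1 with hY
    have hY1 : (1:ℝ) ≤ Y := le_max_right _ _
    refine ⟨max (C_X + 1) (Y ^ α), lt_of_lt_of_le (by linarith) (le_max_left _ _), ?_⟩
    intro y hy
    by_cases hcase : Y ≤ y
    · have h1 := hY₀ y (le_trans (le_max_left _ _) hcase)
      have hyα : (0:ℝ) < y ^ α := Real.rpow_pos_of_pos hy α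
      have h2 : Fbar y ≤ (C_X + 1) * y ^ (-α) := by
        rw [Real.rpow_neg hy.le]
        rw [mul_comm, ← div_eq_inv_mul, le_div_iff₀ hyα, mul_comm (Fbar y)]
        exact h1.le
      refine h2.trans (mul_le_mul_of_nonneg_right (le_max_left _ _) ?_)
      exact (Real.rpow_pos_of_pos hy _).le
    · push_neg at hcase
      have h1 : Fbar y ≤ 1 := (hFrange y hy).2
      have h2 : (1:ℝ) ≤ Y ^ α * y ^ (-α) := by
        rw [Real.rpow_neg hy.le, ← div_eq_mul_inv, le_div_iff₀ (Real.rpow_pos_of_pos hy α),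
          one_mul]
        exact Real.rpow_le_rpow hy.le hcase.le hα.le
      calc Fbar y ≤ 1 := h1
        _ ≤ Y ^ α * y ^ (-α) := h2
        _ ≤ max (C_X + 1) (Y ^ α) * y ^ (-α) :=
            mul_le_mul_of_nonneg_right (le_max_right _ _)
              (Real.rpow_pos_of_pos hy _).le
  -- Potter bound
  obtain ⟨X, hX1, hPot⟩ := slow_potter L hLmeas hLpos hLslow hεpos
  -- positivity of a n
  have hTpos : ∀ n : ℕ, 1 ≤ n →
      0 < C_X * (Real.Gamma (1 - β) / β) * (n : ℝ) ^ β * (m n : ℝ) * L n := by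
    intro n hn
    have hn0 : (0:ℝ) < n := by exact_mod_cast hn
    have hLn : 0 < L n := hLpos _ hn0
    have hmn : (0:ℝ) < m n := by exact_mod_cast hm1 n
    have := Real.rpow_pos_of_pos hn0 β
    positivity
  have hapos : ∀ n : ℕ, 1 ≤ n → 0 < a n := by
    intro n hn
    rw [ha n]
    exact Real.rpow_pos_of_pos (hTpos n hn) _
  have haα : ∀ n : ℕ, 1 ≤ n → (a n) ^ (-α)
      = (C_X * (Real.Gamma (1 - β) / β) * (n : ℝ) ^ β * (m n : ℝ) * L n)⁻¹ := by
    intro n hn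
    rw [ha n, ← Real.rpow_mul (hTpos n hn).le,
      show 1/α * -α = -1 by field_simp, Real.rpow_neg_one]
  -- the key quantitative bound
  set C0 : ℝ := 3 * K * x ^ (-α) * β / (C_X * Real.Gamma (1 - β) * p) with hC0
  set N : ℕ := max ⌈X⌉₊ 1 with hN
  have key : ∀ δ : ℝ, 0 < δ → δ ≤ 1 → ∀ n : ℕ, N ≤ n →
      (m n : ℝ) * ∫ q in Set.Ioo (0:ℝ) (δ / (n : ℝ)),
        (1 - (1 - q) ^ n) * Fbar (a n * q ^ (1 / α') * x) * q ^ (-ρ) * L (1 / q)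
      ≤ C0 * δ ^ p := by
    intro δ hδ hδ1 n hn
    have hn1 : 1 ≤ n := le_trans (le_max_right _ _) hn
    have hn0 : (0:ℝ) < n := by exact_mod_cast hn1
    have hnR1 : (1:ℝ) ≤ n := by exact_mod_cast hn1
    have hXn : X ≤ (n:ℝ) := by
      calc X ≤ (⌈X⌉₊ : ℝ) := Nat.le_ceil X
        _ ≤ (N : ℝ) := by exact_mod_cast le_max_left _ _
        _ ≤ (n : ℝ) := by exact_mod_cast hn
    have han : 0 < a n := hapos n hn1
    set η : ℝ := δ / n with hηdef
    have hη : 0 < η := div_pos hδ hn0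
    have hη1 : η ≤ 1 := by
      rw [hηdef, div_le_one hn0]; linarith
    set D : ℝ := (n:ℝ) * (K * (a n) ^ (-α) * x ^ (-α)) * (3 * L n * (n:ℝ) ^ (-ε)) with hD
    -- pointwise bound
    have hpt : ∀ q ∈ Set.Ioo (0:ℝ) η,
        (1 - (1 - q) ^ n) * Fbar (a n * q ^ (1 / α') * x) * q ^ (-ρ) * L (1 / q)
          ≤ D * q ^ (-(β + ε)) := by
      intro q hq
      obtain ⟨hq0, hqη⟩ := hq
      have hq1 : q ≤ 1 := le_trans hqη.le hη1
      have b1 : 1 - (1 - q) ^ n ≤ (n:ℝ) * q := by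
        have := one_add_mul_le_pow (by linarith : (-2:ℝ) ≤ -q) n
        rw [show (1:ℝ) + -q = 1 - q by ring] at this
        linarith
      have b1' : 0 ≤ 1 - (1 - q) ^ n := by
        have : (1 - q) ^ n ≤ 1 := pow_le_one₀ (by linarith) (by linarith)
        linarith
      have hqrp : 0 < q ^ (1 / α') := Real.rpow_pos_of_pos hq0 _
      have harg : 0 < a n * q ^ (1 / α') * x := by positivity
      have b2 : Fbar (a n * q ^ (1 / α') * x)
          ≤ K * ((a n) ^ (-α) * q ^ (-(α/α')) * x ^ (-α)) := by
        have h1 := hKb _ harg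
        have h2 : (a n * q ^ (1 / α') * x) ^ (-α)
            = (a n) ^ (-α) * q ^ (-(α/α')) * x ^ (-α) := by
          rw [Real.mul_rpow (by positivity) hx.le, Real.mul_rpow han.le hqrp.le,
            ← Real.rpow_mul hq0.le, show 1 / α' * -α = -(α/α') by field_simp]
        rw [h2] at h1
        exact h1
      have b2' : 0 ≤ Fbar (a n * q ^ (1 / α') * x) := (hFrange _ harg).1
      have b3 : (0:ℝ) < q ^ (-ρ) := Real.rpow_pos_of_pos hq0 _
      have hinvq : (n:ℝ) ≤ 1 / q := by
        have h1 : q * n < δ := by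
          rw [hηdef] at hqη
          exact (lt_div_iff₀ hn0).1 hqη
        rw [le_div_iff₀ hq0]
        nlinarith
      have b4 : L (1/q) ≤ 3 * L n * (q ^ (-ε) * (n:ℝ) ^ (-ε)) := by
        have h1 := hPot (n:ℝ) (1/q) hXn hinvq
        have h2 : ((1/q) / (n:ℝ)) ^ ε = q ^ (-ε) * (n:ℝ) ^ (-ε) := by
          rw [show (1/q) / (n:ℝ) = (q * n)⁻¹ by field_simp,
            ← Real.rpow_neg_one (q * (n:ℝ)), ← Real.rpow_mul (by positivity),
            show (-1) * ε = -ε by ring, Real.mul_rpow hq0.le hn0.le]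
        rw [h2] at h1
        exact h1
      have b4' : 0 ≤ L (1/q) := (hLpos _ (by positivity)).le
      have hprod : (1 - (1 - q) ^ n) * Fbar (a n * q ^ (1 / α') * x) * q ^ (-ρ) * L (1 / q)
          ≤ ((n:ℝ) * q) * (K * ((a n) ^ (-α) * q ^ (-(α/α')) * x ^ (-α))) * q ^ (-ρ)
            * (3 * L n * (q ^ (-ε) * (n:ℝ) ^ (-ε))) := by
        have s1 : (1 - (1 - q) ^ n) * Fbar (a n * q ^ (1 / α') * x)
            ≤ ((n:ℝ) * q) * (K * ((a n) ^ (-α) * q ^ (-(α/α')) * x ^ (-α))) :=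
          mul_le_mul b1 b2 b2' (by positivity)
        have s2 : (1 - (1 - q) ^ n) * Fbar (a n * q ^ (1 / α') * x) * q ^ (-ρ)
            ≤ ((n:ℝ) * q) * (K * ((a n) ^ (-α) * q ^ (-(α/α')) * x ^ (-α))) * q ^ (-ρ) :=
          mul_le_mul_of_nonneg_right s1 b3.le
        exact mul_le_mul s2 b4 b4' (by positivity)
      refine hprod.trans (le_of_eq ?_)
      have hqpow : q * q ^ (-(α/α')) * q ^ (-ρ) * q ^ (-ε) = q ^ (-(β + ε)) := by
        rw [show q * q ^ (-(α/α')) * q ^ (-ρ) * q ^ (-ε)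
            = q ^ (1:ℝ) * q ^ (-(α/α')) * q ^ (-ρ) * q ^ (-ε) by rw [Real.rpow_one]]
        rw [← Real.rpow_add hq0, ← Real.rpow_add hq0, ← Real.rpow_add hq0]
        congr 1
        rw [hβdef]
        ring
      calc ((n:ℝ) * q) * (K * ((a n) ^ (-α) * q ^ (-(α/α')) * x ^ (-α))) * q ^ (-ρ)
            * (3 * L n * (q ^ (-ε) * (n:ℝ) ^ (-ε)))
          = D * (q * q ^ (-(α/α')) * q ^ (-ρ) * q ^ (-ε)) := by rw [hD]; ring
        _ = D * q ^ (-(β + ε)) := by rw [hqpow]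
    -- nonnegativity
    have hnn : ∀ q ∈ Set.Ioo (0:ℝ) η,
        0 ≤ (1 - (1 - q) ^ n) * Fbar (a n * q ^ (1 / α') * x) * q ^ (-ρ) * L (1 / q) := by
      intro q hq
      obtain ⟨hq0, hqη⟩ := hq
      have hq1 : q ≤ 1 := le_trans hqη.le hη1
      have b1' : 0 ≤ 1 - (1 - q) ^ n := by
        have : (1 - q) ^ n ≤ 1 := pow_le_one₀ (by linarith) (by linarith)
        linarith
      have hqrp : 0 < q ^ (1 / α') := Real.rpow_pos_of_pos hq0 _
      have harg : 0 < a n * q ^ (1 / α') * x := by positivity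
      have b2' : 0 ≤ Fbar (a n * q ^ (1 / α') * x) := (hFrange _ harg).1
      have b3 : (0:ℝ) ≤ q ^ (-ρ) := (Real.rpow_pos_of_pos hq0 _).le
      have b4' : 0 ≤ L (1/q) := (hLpos _ (by positivity)).le
      positivity
    -- integrability of the majorant
    have hint_g : MeasureTheory.IntegrableOn (fun q : ℝ => D * q ^ (-(β + ε)))
        (Set.Ioo (0:ℝ) η) := by
      have h1 : IntervalIntegrable (fun q : ℝ => q ^ (-(β + ε))) MeasureTheory.volume 0 η :=
        intervalIntegral.intervalIntegrable_rpow' (by linarith)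
      have h2 := (intervalIntegrable_iff_integrableOn_Ioc_of_le hη.le).1 h1
      exact (h2.mono_set Set.Ioo_subset_Ioc_self).const_mul D
    -- integral bound
    have hIb : ∫ q in Set.Ioo (0:ℝ) η,
        (1 - (1 - q) ^ n) * Fbar (a n * q ^ (1 / α') * x) * q ^ (-ρ) * L (1 / q)
        ≤ ∫ q in Set.Ioo (0:ℝ) η, D * q ^ (-(β + ε)) :=
      MeasureTheory.integral_mono_of_nonneg
        (MeasureTheory.ae_restrict_of_forall_mem measurableSet_Ioo hnn) hint_g
        (MeasureTheory.ae_restrict_of_forall_mem measurableSet_Ioo hpt)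
    have hIval : ∫ q in Set.Ioo (0:ℝ) η, D * q ^ (-(β + ε)) = D * (η ^ p / p) := by
      rw [MeasureTheory.integral_const_mul]
      congr 1
      rw [← MeasureTheory.integral_Ioc_eq_integral_Ioo,
        ← intervalIntegral.integral_of_le hη.le,
        integral_rpow (Or.inl (by linarith : (-1:ℝ) < -(β+ε)))]
      rw [Real.zero_rpow (by simp only [hpdef] at hppos ⊢; linarith : -(β+ε) + 1 ≠ 0)]
      rw [show -(β+ε) + 1 = p by simp only [hpdef]; ring]
      ring
    -- the scalar computation
    have hmn0 : (0:ℝ) < m n := by exact_mod_cast hm1 n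
    have hLn : 0 < L n := hLpos _ hn0
    have hnβ : (0:ℝ) < (n:ℝ) ^ β := Real.rpow_pos_of_pos hn0 β
    have hnp : (0:ℝ) < (n:ℝ) ^ p := Real.rpow_pos_of_pos hn0 p
    have hnε : (0:ℝ) < (n:ℝ) ^ (-ε) := Real.rpow_pos_of_pos hn0 _
    have hηp : η ^ p = δ ^ p * ((n:ℝ) ^ p)⁻¹ := by
      rw [hηdef, Real.div_rpow hδ.le hn0.le, div_eq_mul_inv]
    have hkey : (n:ℝ) * (n:ℝ) ^ (-ε) = (n:ℝ) ^ β * (n:ℝ) ^ p := by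
      rw [show (n:ℝ) * (n:ℝ) ^ (-ε) = (n:ℝ) ^ (1:ℝ) * (n:ℝ) ^ (-ε) by rw [Real.rpow_one]]
      rw [← Real.rpow_add hn0, ← Real.rpow_add hn0]
      congr 1
      simp only [hpdef]
      ring
    have halg : (m n : ℝ) * (D * (η ^ p / p)) = C0 * δ ^ p := by
      rw [hD, haα n hn1, hηp, hC0]
      field_simp [hmn0.ne', hLn.ne', hnβ.ne', hnp.ne', hΓpos.ne', hppos.ne', hC.ne', hβ0.ne']
      linear_combination hkey
    calc (m n : ℝ) * ∫ q in Set.Ioo (0:ℝ) (δ / (n : ℝ)),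
          (1 - (1 - q) ^ n) * Fbar (a n * q ^ (1 / α') * x) * q ^ (-ρ) * L (1 / q)
        ≤ (m n : ℝ) * (D * (η ^ p / p)) := by
          apply mul_le_mul_of_nonneg_left _ hmn0.le
          rw [← hIval]
          exact hIb
      _ = C0 * δ ^ p := halg
  have hlim : ∀ δ : ℝ, 0 < δ → δ ≤ 1 →
      Filter.limsup
        (fun n : ℕ => ENNReal.ofReal ((m n : ℝ) *
          ∫ q in Set.Ioo (0:ℝ) (δ / (n : ℝ)),
            (1 - (1 - q) ^ n) * Fbar (a n * q ^ (1 / α') * x) * q ^ (-ρ) * L (1 / q)))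
        atTop ≤ ENNReal.ofReal (C0 * δ ^ p) := by
    intro δ hδ hδ1
    refine Filter.limsup_le_of_le ?_ ?_
    · exact Filter.isCoboundedUnder_le_of_le atTop (fun i => zero_le)
    · filter_upwards [eventually_ge_atTop N] with n hn
      exact ENNReal.ofReal_le_ofReal (key δ hδ hδ1 n hn)
  have hups : Tendsto (fun δ : ℝ => ENNReal.ofReal (C0 * δ ^ p))
      (nhdsWithin (0:ℝ) (Set.Ioi 0)) (nhds (0 : ENNReal)) := by
    have h1 : Tendsto (fun δ : ℝ => δ ^ p) (nhds (0:ℝ)) (nhds (0:ℝ)) := by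
      have := (Real.continuousAt_rpow_const 0 p (Or.inr hppos.le)).tendsto
      rwa [Real.zero_rpow hppos.ne'] at this
    have h2 : Tendsto (fun δ : ℝ => C0 * δ ^ p) (nhds (0:ℝ)) (nhds (0:ℝ)) := by
      have := h1.const_mul C0
      rwa [mul_zero] at this
    have h3 : Tendsto (fun δ : ℝ => C0 * δ ^ p)
        (nhdsWithin (0:ℝ) (Set.Ioi 0)) (nhds (0:ℝ)) :=
      h2.mono_left nhdsWithin_le_nhds
    have h4 := (ENNReal.continuous_ofReal.tendsto 0).comp h3
    rw [ENNReal.ofReal_zero] at h4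
    exact h4
  refine tendsto_of_tendsto_of_tendsto_of_le_of_le' tendsto_const_nhds hups ?_ ?_
  · filter_upwards with δ
    exact zero_le
  · filter_upwards [Ioc_mem_nhdsGT_of_mem (Set.left_mem_Ico.2 one_pos)] with δ hδ
    exact hlim δ hδ.1 hδ.2
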